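/- Let M be a family of weak compositions of an n-element set S into p parts such that each family M_k = {A_k : A ∈ M} is an antichain. Then |M| ≤ max over (α_1,…,α_p) with α_1+⋯+α_p = n of multinomial(n; α_1,…,α_p). -/

import Mathlib

open Finset

private lemma meshalkin_core {α : Type*} [DecidableEq α] :
    ∀ (xs ys : List (List α)), xs.length = ys.length →
      xs.flatten = ys.flatten → xs.flatten.Nodup →
      (∀ (i : ℕ) (h1 : i < xs.length) (h2 : i < ys.length),
        ((xs.get ⟨i, h1⟩).toFinset ⊆ (ys.get ⟨i, h2⟩).toFinset ∨
          (ys.get ⟨i, h2⟩).toFinset ⊆ (xs.get ⟨i, h1⟩).toFinset) →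
        (xs.get ⟨i, h1⟩).toFinset = (ys.get ⟨i, h2⟩).toFinset) →
      xs = ys := by
  intro xs
  induction xs with
  | nil =>
    intro ys hlen _ _ _
    exact (List.eq_nil_of_length_eq_zero hlen.symm).symm
  | cons x xs ih =>
    intro ys hlen hj hnd H
    cases ys with
    | nil => simp at hlen
    | cons y ys =>
      simp only [List.flatten_cons] at hj hnd
      -- x and y are prefixes of the same list
      have hx : x <+: (x ++ xs.flatten) := List.prefix_append x _
      have hy : y <+: (x ++ xs.flatten) := hj ▸ List.prefix_append y _
      have hcomp : x <+: y ∨ y <+: x := List.prefix_or_prefix_of_prefix hx hy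
      have hsub : x.toFinset ⊆ y.toFinset ∨ y.toFinset ⊆ x.toFinset := by
        rcases hcomp with h | h
        · exact Or.inl (fun a ha => by
            simp only [List.mem_toFinset] at *; exact h.sublist.subset ha)
        · exact Or.inr (fun a ha => by
            simp only [List.mem_toFinset] at *; exact h.sublist.subset ha)
      have hfe : x.toFinset = y.toFinset := by
        have := H 0 (by simp) (by simp)
        simpa using this hsub
      have hndx : x.Nodup := hnd.of_append_left
      have hndy : y.Nodup := (hj ▸ hnd).of_append_left
      have hlxy : x.length = y.length := by
        rw [← List.toFinset_card_of_nodup hndx, ← List.toFinset_card_of_nodup hndy, hfe]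
      have hxy : x = y := by
        rcases hcomp with h | h
        · exact h.eq_of_length_le (le_of_eq hlxy.symm)
        · exact (h.eq_of_length_le (le_of_eq hlxy)).symm
      subst hxy
      have hj' : xs.flatten = ys.flatten := by
        exact List.append_cancel_left hj
      have : xs = ys := by
        refine ih ys (by simpa using hlen) hj' (hnd.of_append_right) ?_
        intro i h1 h2 hc
        have := H (i + 1) (by simpa using Nat.succ_lt_succ h1)
          (by simpa using Nat.succ_lt_succ h2)
        simpa using this (by simpa using hc)
      rw [this]

/-- Meshalkin's theorem: if `M` is a family of weak compositions of an `n`-set `S` into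
`p ≥ 1` parts and each `M_k` is an antichain, then `|M|` is at most the maximum
multinomial coefficient `multinomial(n; α_1, …, α_p)` over compositions `α` of `n`. -/
theorem meshalkin_theorem {α : Type*} [DecidableEq α] (n p : ℕ) (hp : 1 ≤ p)
    (S : Finset α) (hS : S.card = n) (M : Finset (Fin p → Finset α))
    (hcomp : ∀ A ∈ M, (∀ i j : Fin p, i ≠ j → Disjoint (A i) (A j)) ∧
      Finset.univ.biUnion A = S)
    (hanti : ∀ k : Fin p,
      IsAntichain (· ⊆ ·) {B : Finset α | ∃ A ∈ M, A k = B}) :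
    ∃ β : Fin p → ℕ, ∑ i, β i = n ∧
      M.card ≤ Nat.multinomial Finset.univ β := by
  classical
  -- sizes of compositions sum to n
  have hsizes : ∀ A ∈ M, ∑ k, (A k).card = n := by
    intro A hA
    rw [← hS, ← (hcomp A hA).2, Finset.card_biUnion]
    intro i _ j _ hij
    exact (hcomp A hA).1 i j hij
  -- choose β maximizing the multinomial over compositions of n
  set K : Finset (Fin p → ℕ) :=
    (Fintype.piFinset fun _ : Fin p => Finset.range (n + 1)).filter
      (fun β => ∑ i, β i = n) with hK
  have hK0 : K.Nonempty := by
    refine ⟨fun k => if k = ⟨0, hp⟩ then n else 0, ?_⟩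
    simp only [hK, Finset.mem_filter, Fintype.mem_piFinset, Finset.mem_range]
    constructor
    · intro k; split <;> omega
    · simp
  obtain ⟨β, hβK, hβmax⟩ := Finset.exists_max_image K (Nat.multinomial Finset.univ) hK0
  have hβsum : ∑ i, β i = n := (Finset.mem_filter.mp hβK).2
  refine ⟨β, hβsum, ?_⟩
  -- the key counting inequality
  -- domain: pairs (A, tuple of orderings of parts)
  set D : (Fin p → Finset α) → Finset (Fin p → List α) :=
    fun A => Fintype.piFinset fun k => ((A k).toList.permutations).toFinset with hD
  set g : (Σ _ : Fin p → Finset α, Fin p → List α) → List α :=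
    fun x => (List.ofFn x.2).flatten with hg
  have hDmem : ∀ {A f}, f ∈ D A → ∀ k, (f k).Perm (A k).toList := by
    intro A f hf k
    have := Fintype.mem_piFinset.mp hf k
    rw [List.mem_toFinset, List.mem_permutations] at this
    exact this
  -- joined list is a permutation of S.toList
  have hperm : ∀ A ∈ M, ∀ f ∈ D A, (g ⟨A, f⟩).Perm S.toList := by
    intro A hA f hf
    have h1 : (List.ofFn f).flatten.Perm (List.ofFn fun k => (A k).toList).flatten := by
      refine List.Perm.flatten_congr ?_
      rw [List.forall₂_iff_get]
      refine ⟨by simp, ?_⟩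
      intro i h1 h2
      simp only [List.get_ofFn]
      exact hDmem hf _
    refine h1.trans ?_
    have hnd : (List.ofFn fun k => (A k).toList).flatten.Nodup := by
      rw [List.nodup_flatten]
      constructor
      · intro l hl
        rw [List.mem_ofFn] at hl
        obtain ⟨k, rfl⟩ := hl
        exact Finset.nodup_toList _
      · rw [List.pairwise_ofFn]
        intro i j hij
        intro a ha hb
        exact (Finset.disjoint_left.mp ((hcomp A hA).1 i j hij.ne)
          (by simpa using ha) (by simpa using hb)).elim
    refine List.perm_of_nodup_nodup_toFinset_eq hnd (Finset.nodup_toList S) ?_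
    ext a
    simp only [List.mem_toFinset, List.mem_flatten, List.mem_ofFn, Finset.mem_toList]
    constructor
    · rintro ⟨l, ⟨k, rfl⟩, ha⟩
      rw [← (hcomp A hA).2]
      exact Finset.mem_biUnion.mpr ⟨k, Finset.mem_univ k, by simpa using ha⟩
    · intro ha
      rw [← (hcomp A hA).2] at ha
      obtain ⟨k, _, hk⟩ := Finset.mem_biUnion.mp ha
      exact ⟨(A k).toList, ⟨k, rfl⟩, by simpa using hk⟩
  -- counting: sum of products of factorials ≤ n!
  have hcount : ∑ A ∈ M, ∏ k, Nat.factorial (A k).card ≤ Nat.factorial n := by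
    have hcards : ∀ A, (D A).card = ∏ k, Nat.factorial (A k).card := by
      intro A
      rw [hD, Fintype.card_piFinset]
      congr 1; ext k
      rw [List.toFinset_card_of_nodup (List.nodup_permutations _ (Finset.nodup_toList _)),
        List.length_permutations, Finset.length_toList]
    calc ∑ A ∈ M, ∏ k, Nat.factorial (A k).card = ∑ A ∈ M, (D A).card := by
          simp_rw [hcards]
      _ = (M.sigma D).card := (Finset.card_sigma M D).symm
      _ ≤ (S.toList.permutations.toFinset).card := by
          refine Finset.card_le_card_of_injOn g ?_ ?_
          · rintro ⟨A, f⟩ hAf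
            rw [Finset.mem_coe, Finset.mem_sigma] at hAf
            rw [Finset.mem_coe, List.mem_toFinset, List.mem_permutations]
            exact hperm A hAf.1 f hAf.2
          · rintro ⟨A, f⟩ hAf ⟨B, e⟩ hBe heq
            rw [Finset.mem_coe, Finset.mem_sigma] at hAf hBe
            have hndA : (g ⟨A, f⟩).Nodup :=
              (hperm A hAf.1 f hAf.2).nodup_iff.mpr (Finset.nodup_toList S)
            have hfA : ∀ k, (f k).toFinset = A k := by
              intro k
              ext a
              rw [List.mem_toFinset, (hDmem hAf.2 k).mem_iff, Finset.mem_toList]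
            have heB : ∀ k, (e k).toFinset = B k := by
              intro k
              ext a
              rw [List.mem_toFinset, (hDmem hBe.2 k).mem_iff, Finset.mem_toList]
            have key : List.ofFn f = List.ofFn e := by
              refine meshalkin_core (List.ofFn f) (List.ofFn e) (by simp) heq hndA ?_
              intro i h1 h2 hc
              have hip : i < p := by simpa using h1
              simp only [List.get_ofFn, Fin.cast] at hc ⊢
              rw [hfA, heB] at hc ⊢
              have hApart : A ⟨i, hip⟩ ∈
                  {B : Finset α | ∃ A ∈ M, A ⟨i, hip⟩ = B} :=
                ⟨A, hAf.1, rfl⟩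
              have hBpart : B ⟨i, hip⟩ ∈
                  {C : Finset α | ∃ A ∈ M, A ⟨i, hip⟩ = C} :=
                ⟨B, hBe.1, rfl⟩
              by_contra hne
              rcases hc with h | h
              · exact hanti _ hApart hBpart hne h
              · exact hanti _ hBpart hApart (fun hh => hne hh.symm) h
            have hfe : f = e := List.ofFn_injective key
            have hAB : A = B := by
              funext k
              rw [← hfA k, ← heB k, hfe]
            subst hAB; subst hfe; rfl
      _ = Nat.factorial n := by
          rw [List.toFinset_card_of_nodup
            (List.nodup_permutations _ (Finset.nodup_toList S)),
            List.length_permutations, Finset.length_toList, hS]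
  -- conclude via the maximality of β
  have hnn : 0 < Nat.factorial n := Nat.factorial_pos n
  have hmain : M.card * Nat.factorial n ≤ Nat.multinomial Finset.univ β * Nat.factorial n := by
    calc M.card * Nat.factorial n = ∑ _A ∈ M, Nat.factorial n := by rw [Finset.sum_const, smul_eq_mul]
      _ = ∑ A ∈ M, (∏ k, Nat.factorial (A k).card) * Nat.multinomial Finset.univ (fun k => (A k).card) := by
          refine Finset.sum_congr rfl fun A hA => ?_
          rw [Nat.multinomial_spec, hsizes A hA]
      _ ≤ ∑ A ∈ M, (∏ k, Nat.factorial (A k).card) * Nat.multinomial Finset.univ β := by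
          refine Finset.sum_le_sum fun A hA => ?_
          refine Nat.mul_le_mul_left _ (hβmax _ ?_)
          simp only [hK, Finset.mem_filter, Fintype.mem_piFinset, Finset.mem_range]
          refine ⟨fun k => ?_, hsizes A hA⟩
          have : (A k).card ≤ n := by
            rw [← hS]
            refine Finset.card_le_card ?_
            rw [← (hcomp A hA).2]
            exact fun a ha => Finset.mem_biUnion.mpr ⟨k, Finset.mem_univ k, ha⟩
          simpa using Nat.lt_succ_of_le this
      _ = Nat.multinomial Finset.univ β * ∑ A ∈ M, ∏ k, Nat.factorial (A k).card := by
          rw [Finset.mul_sum]; exact Finset.sum_congr rfl fun A _ => mul_comm _ _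
      _ ≤ Nat.multinomial Finset.univ β * Nat.factorial n := Nat.mul_le_mul le_rfl hcount
  exact Nat.le_of_mul_le_mul_right hmain hnn
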